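/- Fix k ≥ 1, ε > 0, δ > 0, R > 0 and constants as in the inductive scheme. Suppose (G_{ij})_{1≤i≤n, 1≤j≤k} ∈ ℂ^{n×k} satisfies: (a) |Σ_i conj(G_{ij}) G_{iℓ}| < √(n/δ) for all 1 ≤ j ≠ ℓ ≤ k; (b) |Σ_i |G_{ij}|²/n − 1| < √(2/(nδ)) for all j ≤ k; (c) |G_{ij}| < R for all i, j ≤ k. Let (U_j)_{j≤k} be the Gram–Schmidt orthonormalization of the columns (G_j)_{j≤k}. Then there exists N (depending only on k, ε, δ, R) such that for all n ≥ N, Σ_{i,j=1}^k |√n U_{ij} − G_{ij}| < ε. -/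

import Mathlib

open scoped InnerProductSpace
open Finset

lemma aux_sum_apply {n k : ℕ} (v : Fin k → EuclideanSpace ℂ (Fin n)) (s : Finset (Fin k)) (i : Fin n) :
    (∑ ℓ ∈ s, v ℓ) i = ∑ ℓ ∈ s, v ℓ i := by
  induction s using Finset.cons_induction with
  | empty => rfl
  | cons a s ha ih => rw [Finset.sum_cons, Finset.sum_cons, ← ih]; rfl

lemma aux_ent_le {n : ℕ} (x : EuclideanSpace ℂ (Fin n)) (i : Fin n) : ‖x i‖ ≤ ‖x‖ := by
  rw [EuclideanSpace.norm_eq]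
  refine (Real.le_sqrt (norm_nonneg _) (by positivity)).mpr ?_
  exact Finset.single_le_sum (f := fun i => ‖x i‖^2) (fun _ _ => by positivity) (Finset.mem_univ i)

lemma aux_normsq {n : ℕ} (x : EuclideanSpace ℂ (Fin n)) : ‖x‖^2 = ∑ i, ‖x i‖ ^ 2 := by
  rw [EuclideanSpace.norm_eq, Real.sq_sqrt (by positivity)]

lemma aux_coe_smul {n : ℕ} (r : ℝ) (x : EuclideanSpace ℂ (Fin n)) : ((r:ℂ) • x) = r • x := by
  ext i; simp [PiLp.smul_apply, Complex.real_smul]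

lemma aux_inner_real_smul {n : ℕ} (r : ℝ) (x y : EuclideanSpace ℂ (Fin n)) :
    ⟪r • x, y⟫_ℂ = (r:ℂ) * ⟪x, y⟫_ℂ := by
  rw [← aux_coe_smul, inner_smul_left, Complex.conj_ofReal]

set_option maxHeartbeats 2000000 in
/-- The deterministic core of the proof (`Dⁿ ⊆ Eⁿ`): if the `n × k` matrix `G` has
almost orthogonal columns (a), columns of norm close to `√n` (b), and bounded upper
`k × k` entries (c), and `U` is the Gram–Schmidt orthonormalization of the columns
`g j = (G i j)_i` of `G`, then for all sufficiently large `n` (with threshold depending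
only on `k, ε, δ, R`) one has `∑_{i,j≤k} |√n U_{ij} − G_{ij}| < ε`. -/
theorem stmt19 (k : ℕ) (ε δ R : ℝ) (hε : 0 < ε) (hδ : 0 < δ) (hR : 0 < R) :
    ∃ N : ℕ, ∀ n : ℕ, N ≤ n → ∀ (hkn : k ≤ n) (G : Fin n → Fin k → ℂ)
      (g U : Fin k → EuclideanSpace ℂ (Fin n)),
      (∀ (j : Fin k) (i : Fin n), g j i = G i j) →
      (∀ j ℓ : Fin k, j ≠ ℓ →
        ‖∑ i, (starRingEnd ℂ) (G i j) * G i ℓ‖ < Real.sqrt (n / δ)) →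
      (∀ j : Fin k, |(∑ i, ‖G i j‖ ^ 2) / n - 1| < Real.sqrt (2 / (n * δ))) →
      (∀ i j : Fin k, ‖G (Fin.castLE hkn i) j‖ < R) →
      LinearIndependent ℂ g →
      (∀ j : Fin k, U j =
        ‖g j - ∑ ℓ ∈ univ.filter (fun ℓ => ℓ < j), (⟪U ℓ, g j⟫_ℂ) • U ℓ‖⁻¹ •
          (g j - ∑ ℓ ∈ univ.filter (fun ℓ => ℓ < j), (⟪U ℓ, g j⟫_ℂ) • U ℓ)) →
      ∑ i : Fin k, ∑ j : Fin k,
        ‖(Real.sqrt n : ℂ) * U j (Fin.castLE hkn i) - G (Fin.castLE hkn i) j‖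
          < ε := by
  classical
  set T : ℝ := Real.sqrt (2/δ) with hTdef
  have hT0 : 0 ≤ T := Real.sqrt_nonneg _
  set sδ : ℝ := Real.sqrt (1/δ) with hsδdef
  have hsδ0 : 0 ≤ sδ := Real.sqrt_nonneg _
  -- recursion Y for global norm bounds
  set Y : ℕ → ℝ := fun m => Nat.rec 0 (fun _ y => T + 2*k*(sδ + 2*y)) m with hYdef
  have hYsucc : ∀ m, Y (m+1) = T + 2*k*(sδ + 2*Y m) := fun m => rfl
  have hY0 : ∀ m, 0 ≤ Y m := by
    intro m; induction m with
    | zero => simp [hYdef]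
    | succ m ih => rw [hYsucc]; positivity
  have hk0 : (0:ℝ) ≤ (k:ℝ) := Nat.cast_nonneg k
  have hYmono : Monotone Y := by
    refine monotone_nat_of_le_succ ?_
    intro m; induction m with
    | zero =>
      calc Y 0 = 0 := rfl
      _ ≤ T + 2*k*(sδ + 2*Y 0) := by nlinarith [hY0 0]
      _ = Y 1 := (hYsucc 0).symm
    | succ m ih =>
      calc Y (m+1) = T + 2*k*(sδ + 2*Y m) := hYsucc m
      _ ≤ T + 2*k*(sδ + 2*Y (m+1)) := by nlinarith [ih]
      _ = Y (m+1+1) := (hYsucc (m+1)).symm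
  set c' : ℝ := sδ + 2 * Y k with hc'def
  have hc'0 : 0 ≤ c' := by have := hY0 k; rw [hc'def]; linarith
  set S' : ℝ := k * c' with hS'def
  have hS'0 : 0 ≤ S' := mul_nonneg (Nat.cast_nonneg k) hc'0
  set Q' : ℝ := T + S' with hQ'def
  have hQ'0 : 0 ≤ Q' := add_nonneg hT0 hS'0
  set F : ℝ := (k:ℝ)^2 / ε with hFdef
  set Z : ℕ → ℝ := fun m => Nat.rec 0 (fun _ z => 2*Q'*R + 2*k*c'*(R + z)) m with hZdef
  have hZsucc : ∀ m, Z (m+1) = 2*Q'*R + 2*k*c'*(R + Z m) := fun m => rfl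
  have hZ0 : ∀ m, 0 ≤ Z m := by
    intro m; induction m with
    | zero => simp [hZdef]
    | succ m ih => rw [hZsucc]; positivity
  have hZmono : Monotone Z := by
    refine monotone_nat_of_le_succ ?_
    intro m; induction m with
    | zero =>
      calc Z 0 = 0 := rfl
      _ ≤ 2*Q'*R + 2*k*c'*(R + Z 0) := by nlinarith [hZ0 0, hR.le]
      _ = Z 1 := (hZsucc 0).symm
    | succ m ih =>
      calc Z (m+1) = 2*Q'*R + 2*k*c'*(R + Z m) := hZsucc m
      _ ≤ 2*Q'*R + 2*k*c'*(R + Z (m+1)) := by nlinarith [ih, hc'0]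
      _ = Z (m+1+1) := (hZsucc (m+1)).symm
  refine ⟨⌈2/δ⌉₊ + ⌈(2*Q')^2⌉₊ + ⌈(F * Z k)^2⌉₊ + 1, ?_⟩
  intro n hn hkn G g U hg ha hb hc _hli hU
  have hn1 : 1 ≤ n := by omega
  have hn0 : (0:ℝ) < n := by exact_mod_cast Nat.pos_of_ne_zero (by omega)
  set sqn : ℝ := Real.sqrt n with hsqndef
  have hsqn0 : 0 < sqn := Real.sqrt_pos.mpr hn0
  have hsqn1 : 1 ≤ sqn := by
    rw [hsqndef]; rw [show (1:ℝ) = Real.sqrt 1 by simp]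
    exact Real.sqrt_le_sqrt (by exact_mod_cast hn1)
  have hnδ : 2/δ ≤ (n:ℝ) := by
    calc 2/δ ≤ (⌈2/δ⌉₊ : ℝ) := Nat.le_ceil _
    _ ≤ n := by exact_mod_cast le_trans (by omega) hn
  have hTsqn : T ≤ sqn := by
    rw [hTdef, hsqndef]; exact Real.sqrt_le_sqrt hnδ
  have hQsqn : 2*Q' ≤ sqn := by
    have h1 : (2*Q')^2 ≤ (n:ℝ) := by
      calc (2*Q')^2 ≤ (⌈(2*Q')^2⌉₊ : ℝ) := Nat.le_ceil _
      _ ≤ n := by exact_mod_cast le_trans (by omega) hn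
    calc 2*Q' = Real.sqrt ((2*Q')^2) := (Real.sqrt_sq (by positivity)).symm
    _ ≤ sqn := Real.sqrt_le_sqrt h1
  have hfin : F * Z k < sqn := by
    have h1 : (F * Z k)^2 < (n:ℝ) := by
      calc (F * Z k)^2 ≤ (⌈(F * Z k)^2⌉₊ : ℝ) := Nat.le_ceil _
      _ < n := by exact_mod_cast lt_of_lt_of_le (by omega) hn
    have h2 : (0:ℝ) ≤ F * Z k := mul_nonneg (by rw [hFdef]; positivity) (hZ0 k)
    nlinarith [hsqn0, Real.sq_sqrt hn0.le]

  -- basic facts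
  have habs : ∀ z : ℂ, ‖z‖ = ‖z‖ := fun z => rfl
  -- norm of columns close to √n
  have hgnorm : ∀ j : Fin k, |‖g j‖ - sqn| ≤ T ∧ ‖g j‖ ≤ 2 * sqn := by
    intro j
    have h1 : ‖g j‖^2 = ∑ i, ‖G i j‖^2 := by
      rw [aux_normsq]; exact Finset.sum_congr rfl fun i _ => by rw [hg j i]
    have hb' := hb j
    have h3 : (∑ i, ‖G i j‖ ^ 2) / n - 1 = (‖g j‖^2 - n)/n := by
      rw [h1]; field_simp
    rw [h3, abs_div, abs_of_pos hn0] at hb'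
    have h4 : Real.sqrt (2/((n:ℝ)*δ)) = T / sqn := by
      rw [hTdef, hsqndef, ← Real.sqrt_div (by positivity : (0:ℝ) ≤ 2/δ)]
      congr 1; field_simp
    rw [h4] at hb'
    have hnsq : sqn^2 = (n:ℝ) := Real.sq_sqrt hn0.le
    have h5 : |‖g j‖^2 - n| ≤ sqn * T := by
      have h := (div_lt_div_iff₀ hn0 hsqn0).mp hb'
      rw [← hnsq] at h
      have h' : |‖g j‖^2 - ((n:ℝ))| * sqn ≤ (sqn * T) * sqn := by
        rw [← hnsq]; ring_nf at h ⊢; linarith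
      exact le_of_mul_le_mul_right h' hsqn0
    have key : |‖g j‖ - sqn| * (‖g j‖ + sqn) = |‖g j‖^2 - (n:ℝ)| := by
      rw [← abs_of_nonneg (by positivity : (0:ℝ) ≤ ‖g j‖ + sqn), ← abs_mul]
      congr 1; linear_combination -hnsq
    have h6 : |‖g j‖ - sqn| ≤ T := by
      have h7 : |‖g j‖ - sqn| * sqn ≤ T * sqn := by
        calc |‖g j‖ - sqn| * sqn ≤ |‖g j‖ - sqn| * (‖g j‖ + sqn) := by
              apply mul_le_mul_of_nonneg_left (by linarith [norm_nonneg (g j)]) (abs_nonneg _)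
        _ = |‖g j‖^2 - (n:ℝ)| := key
        _ ≤ sqn * T := h5
        _ = T * sqn := mul_comm _ _
      exact le_of_mul_le_mul_right h7 hsqn0
    refine ⟨h6, ?_⟩
    have := (abs_le.mp h6).2; linarith
  -- inner products of columns are small
  have hip : ∀ j ℓ : Fin k, j ≠ ℓ → ‖⟪g j, g ℓ⟫_ℂ‖ < sδ * sqn := by
    intro j ℓ hne
    have h1 : ⟪g j, g ℓ⟫_ℂ = ∑ i, (starRingEnd ℂ) (G i j) * G i ℓ := by
      rw [PiLp.inner_apply]
      exact Finset.sum_congr rfl fun i _ => by rw [RCLike.inner_apply, hg j i, hg ℓ i, mul_comm]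
    have h2 : Real.sqrt ((n:ℝ)/δ) = sδ * sqn := by
      rw [hsδdef, hsqndef, show (n:ℝ)/δ = (1/δ) * n by ring,
        Real.sqrt_mul (by positivity : (0:ℝ) ≤ 1/δ)]
    rw [h1, ← h2]
    exact ha j ℓ hne
  -- Gram–Schmidt data
  set Δ : Fin k → EuclideanSpace ℂ (Fin n) :=
    fun j => ∑ ℓ ∈ univ.filter (fun ℓ => ℓ < j), (⟪U ℓ, g j⟫_ℂ) • U ℓ with hΔdef
  set w : Fin k → EuclideanSpace ℂ (Fin n) := fun j => g j - Δ j with hwdef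
  have hUw : ∀ j, U j = ‖w j‖⁻¹ • w j := fun j => hU j
  have hUle : ∀ j, ‖U j‖ ≤ 1 := by
    intro j
    rw [hUw j, norm_smul, norm_inv, norm_norm]
    rcases eq_or_ne ‖w j‖ 0 with h | h
    · rw [h]; norm_num
    · rw [inv_mul_cancel₀ h]
  -- generic bound for the Gram--Schmidt coefficients
  have hcb : ∀ (E : ℝ), 0 ≤ E → ∀ j ℓ : Fin k, ℓ ≠ j → ‖sqn • U ℓ - g ℓ‖ ≤ E →
      ‖⟪U ℓ, g j⟫_ℂ‖ ≤ sδ + 2*E := by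
    intro E hE j ℓ hne hEb
    have h1 : (sqn:ℂ) * ⟪U ℓ, g j⟫_ℂ = ⟪sqn • U ℓ, g j⟫_ℂ := (aux_inner_real_smul _ _ _).symm
    have h2 : ⟪sqn • U ℓ, g j⟫_ℂ = ⟪g ℓ, g j⟫_ℂ + ⟪sqn • U ℓ - g ℓ, g j⟫_ℂ := by
      rw [inner_sub_left]; ring
    have h3 : ‖⟪sqn • U ℓ - g ℓ, g j⟫_ℂ‖ ≤ E * (2*sqn) := by
      rw [habs]
      refine le_trans (norm_inner_le_norm _ _) ?_
      exact mul_le_mul hEb (hgnorm j).2 (norm_nonneg _) hE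
    have h4 : ‖(sqn:ℂ) * ⟪U ℓ, g j⟫_ℂ‖ ≤ sδ*sqn + E*(2*sqn) := by
      rw [h1, h2]
      exact le_trans (norm_add_le _ _) (add_le_add (hip ℓ j hne).le h3)
    have h5 : ‖(sqn:ℂ) * ⟪U ℓ, g j⟫_ℂ‖ = sqn * ‖⟪U ℓ, g j⟫_ℂ‖ := by
      rw [norm_mul, Complex.norm_real, Real.norm_eq_abs, abs_of_pos hsqn0]
    rw [h5] at h4
    have h6 : sqn * ‖⟪U ℓ, g j⟫_ℂ‖ ≤ sqn * (sδ + 2*E) := by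
      ring_nf at h4 ⊢; linarith
    exact le_of_mul_le_mul_left h6 hsqn0
  -- generic bound for ‖Δ j‖
  have hΔnorm : ∀ (C : ℝ), 0 ≤ C → ∀ j : Fin k,
      (∀ ℓ, ℓ < j → ‖⟪U ℓ, g j⟫_ℂ‖ ≤ C) → ‖Δ j‖ ≤ k * C := by
    intro C hC j hco
    calc ‖Δ j‖ ≤ ∑ ℓ ∈ univ.filter (fun ℓ => ℓ < j), ‖(⟪U ℓ, g j⟫_ℂ) • U ℓ‖ :=
          norm_sum_le _ _
    _ ≤ ∑ ℓ ∈ univ.filter (fun ℓ => ℓ < j), C := by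
        refine Finset.sum_le_sum fun ℓ hℓ => ?_
        have hℓj : ℓ < j := (Finset.mem_filter.mp hℓ).2
        rw [norm_smul]
        calc ‖⟪U ℓ, g j⟫_ℂ‖ * ‖U ℓ‖ ≤ C * 1 := by
              refine mul_le_mul ?_ (hUle ℓ) (norm_nonneg _) hC
              rw [← habs]; exact hco ℓ hℓj
        _ = C := mul_one C
    _ = (univ.filter (fun ℓ => ℓ < j)).card * C := by rw [Finset.sum_const, nsmul_eq_mul]
    _ ≤ k * C := by
        refine mul_le_mul_of_nonneg_right ?_ hC
        have := Finset.card_filter_le (univ : Finset (Fin k)) (fun ℓ => ℓ < j)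
        have h2 : (univ : Finset (Fin k)).card = k := by simp
        exact_mod_cast le_trans this (le_of_eq h2)
  -- generic bound for ‖w j‖
  have hwnorm : ∀ (S : ℝ) (j : Fin k), ‖Δ j‖ ≤ S → |‖w j‖ - sqn| ≤ T + S := by
    intro S j hS
    have h1 : |‖w j‖ - ‖g j‖| ≤ ‖Δ j‖ := by
      have h2 : w j - g j = -Δ j := by show g j - Δ j - g j = -Δ j; exact sub_sub_cancel_left _ _
      calc |‖w j‖ - ‖g j‖| ≤ ‖w j - g j‖ := abs_norm_sub_norm_le _ _
      _ = ‖Δ j‖ := by rw [h2, norm_neg]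
    calc |‖w j‖ - sqn| ≤ |‖w j‖ - ‖g j‖| + |‖g j‖ - sqn| := abs_sub_le _ _ _
    _ ≤ S + T := add_le_add (le_trans h1 hS) (hgnorm j).1
    _ = T + S := add_comm _ _
  -- key algebraic identity
  have hkey : ∀ j : Fin k, sqn • U j - g j = (sqn * ‖w j‖⁻¹ - 1) • w j - Δ j := by
    intro j
    rw [hUw j, smul_smul]
    have hgw : g j = w j + Δ j := by
      show g j = (g j - Δ j) + Δ j
      abel
    rw [hgw, sub_smul, one_smul]; abel
  -- bound the smul coefficient by |sqn - ‖w j‖|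
  have hcoef : ∀ j : Fin k, ‖(sqn * ‖w j‖⁻¹ - 1) • w j‖ ≤ |sqn - ‖w j‖| := by
    intro j
    rw [norm_smul, Real.norm_eq_abs]
    rcases eq_or_ne ‖w j‖ 0 with h | h
    · rw [h, mul_zero]; exact abs_nonneg _
    · rw [← abs_of_nonneg (norm_nonneg (w j)), ← abs_mul]
      apply le_of_eq; congr 1
      field_simp
      rw [abs_of_nonneg (norm_nonneg (w j))]; ring
  -- induction 1 : global norm bound
  have claim1 : ∀ j : Fin k, ‖sqn • U j - g j‖ ≤ Y (j.val + 1) := by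
    have main : ∀ m : ℕ, ∀ j : Fin k, j.val < m → ‖sqn • U j - g j‖ ≤ Y (j.val+1) := by
      intro m
      induction m with
      | zero => intro j hj; omega
      | succ m ih =>
        intro j hj
        have hE : ∀ ℓ : Fin k, ℓ < j → ‖sqn • U ℓ - g ℓ‖ ≤ Y j.val := by
          intro ℓ hℓ
          have hlv : ℓ.val < j.val := hℓ
          have h1 : ℓ.val < m := by omega
          have h2 : ℓ.val + 1 ≤ j.val := by omega
          exact le_trans (ih ℓ h1) (hYmono h2)
        have hcbj : ∀ ℓ, ℓ < j → ‖⟪U ℓ, g j⟫_ℂ‖ ≤ sδ + 2*Y j.val :=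
          fun ℓ hℓ => hcb (Y j.val) (hY0 _) j ℓ (ne_of_lt hℓ) (hE ℓ hℓ)
        have hCnn : (0:ℝ) ≤ sδ + 2*Y j.val := by have := hY0 j.val; linarith
        have hΔj : ‖Δ j‖ ≤ k * (sδ + 2*Y j.val) := hΔnorm _ hCnn j hcbj
        have hwj : |‖w j‖ - sqn| ≤ T + k*(sδ + 2*Y j.val) := hwnorm _ j hΔj
        rw [hkey j]
        calc ‖(sqn * ‖w j‖⁻¹ - 1) • w j - Δ j‖
            ≤ ‖(sqn * ‖w j‖⁻¹ - 1) • w j‖ + ‖Δ j‖ := norm_sub_le _ _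
        _ ≤ |sqn - ‖w j‖| + ‖Δ j‖ := add_le_add (hcoef j) le_rfl
        _ ≤ (T + k*(sδ + 2*Y j.val)) + k*(sδ + 2*Y j.val) := by
            rw [abs_sub_comm]; exact add_le_add hwj hΔj
        _ = Y (j.val+1) := by rw [hYsucc]; ring
    intro j; exact main k j j.isLt
  -- uniform consequences
  have hE' : ∀ ℓ : Fin k, ‖sqn • U ℓ - g ℓ‖ ≤ Y k := by
    intro ℓ
    exact le_trans (claim1 ℓ) (hYmono ℓ.isLt)
  have hcb' : ∀ j ℓ : Fin k, ℓ ≠ j → ‖⟪U ℓ, g j⟫_ℂ‖ ≤ c' :=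
    fun j ℓ h => hcb (Y k) (hY0 k) j ℓ h (hE' ℓ)
  have hΔ' : ∀ j, ‖Δ j‖ ≤ S' :=
    fun j => hΔnorm c' hc'0 j (fun ℓ hℓ => hcb' j ℓ (ne_of_lt hℓ))
  have hw' : ∀ j, |‖w j‖ - sqn| ≤ Q' := fun j => hwnorm S' j (hΔ' j)
  have hwpos : ∀ j, sqn/2 ≤ ‖w j‖ := by
    intro j
    have := (abs_le.mp (hw' j)).1
    linarith [hQsqn]
  have hw0 : ∀ j, (0:ℝ) < ‖w j‖ := fun j => lt_of_lt_of_le (by positivity) (hwpos j)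
  -- induction 2 : entrywise bound
  have claim2 : ∀ m : ℕ, ∀ j : Fin k, j.val < m → ∀ i : Fin k,
      ‖(sqn:ℂ) * U j (Fin.castLE hkn i) - G (Fin.castLE hkn i) j‖
        ≤ Z (j.val+1)/sqn := by
    intro m
    induction m with
    | zero => intro j hj; omega
    | succ m ih =>
      intro j hj i
      have hUent : ∀ ℓ : Fin k, ℓ < j →
          ‖U ℓ (Fin.castLE hkn i)‖ ≤ (R + Z j.val)/sqn := by
        intro ℓ hℓ
        have hlv : ℓ.val < j.val := hℓ
        have hlm : ℓ.val < m := by omega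
        have h1 := ih ℓ hlm i
        have h2 : ‖(sqn:ℂ) * U ℓ (Fin.castLE hkn i)‖ ≤ R + Z j.val := by
          have hZm : Z (ℓ.val+1) ≤ Z j.val := hZmono (by omega : ℓ.val + 1 ≤ j.val)
          have hZd : Z (ℓ.val+1)/sqn ≤ Z (ℓ.val+1) := div_le_self (hZ0 (ℓ.val+1)) hsqn1
          calc ‖(sqn:ℂ) * U ℓ (Fin.castLE hkn i)‖
              = ‖((sqn:ℂ) * U ℓ (Fin.castLE hkn i) - G (Fin.castLE hkn i) ℓ)
                  + G (Fin.castLE hkn i) ℓ‖ := by ring_nf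
          _ ≤ ‖(sqn:ℂ) * U ℓ (Fin.castLE hkn i) - G (Fin.castLE hkn i) ℓ‖
                + ‖G (Fin.castLE hkn i) ℓ‖ := norm_add_le _ _
          _ ≤ Z (ℓ.val+1)/sqn + R := add_le_add h1 (hc i ℓ).le
          _ ≤ R + Z j.val := by
              have h9 := le_trans hZd hZm
              linarith [h9]
        have h3 : ‖(sqn:ℂ) * U ℓ (Fin.castLE hkn i)‖
            = sqn * ‖U ℓ (Fin.castLE hkn i)‖ := by
          rw [norm_mul, Complex.norm_real, Real.norm_eq_abs, abs_of_pos hsqn0]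
        rw [h3] at h2
        rw [le_div_iff₀ hsqn0, mul_comm]
        exact h2
      have hDent : ‖Δ j (Fin.castLE hkn i)‖ ≤ k * (c' * ((R + Z j.val)/sqn)) := by
        have hde : Δ j (Fin.castLE hkn i)
            = ∑ ℓ ∈ univ.filter (fun ℓ => ℓ < j), (⟪U ℓ, g j⟫_ℂ) * U ℓ (Fin.castLE hkn i) := by
          show (∑ ℓ ∈ univ.filter (fun ℓ => ℓ < j), (⟪U ℓ, g j⟫_ℂ) • U ℓ) (Fin.castLE hkn i) = _
          rw [aux_sum_apply]
          exact Finset.sum_congr rfl fun ℓ _ => by rw [PiLp.smul_apply, smul_eq_mul]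
        have hterm0 : (0:ℝ) ≤ c' * ((R + Z j.val)/sqn) := by
          apply mul_nonneg hc'0
          apply div_nonneg _ hsqn0.le
          have := hZ0 j.val; linarith
        rw [hde]
        calc ‖∑ ℓ ∈ univ.filter (fun ℓ => ℓ < j),
              (⟪U ℓ, g j⟫_ℂ) * U ℓ (Fin.castLE hkn i)‖
            ≤ ∑ ℓ ∈ univ.filter (fun ℓ => ℓ < j),
              ‖(⟪U ℓ, g j⟫_ℂ) * U ℓ (Fin.castLE hkn i)‖ := by
              have hns := norm_sum_le (univ.filter (fun ℓ => ℓ < j))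
                (fun ℓ => (⟪U ℓ, g j⟫_ℂ) * U ℓ (Fin.castLE hkn i))
              exact hns
        _ ≤ ∑ ℓ ∈ univ.filter (fun ℓ => ℓ < j), c' * ((R + Z j.val)/sqn) := by
            refine Finset.sum_le_sum fun ℓ hℓ => ?_
            have hℓj : ℓ < j := (Finset.mem_filter.mp hℓ).2
            rw [norm_mul]
            exact mul_le_mul (hcb' j ℓ (ne_of_lt hℓj)) (hUent ℓ hℓj)
              (norm_nonneg _) hc'0
        _ = (univ.filter (fun ℓ => ℓ < j)).card * (c' * ((R + Z j.val)/sqn)) := by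
            rw [Finset.sum_const, nsmul_eq_mul]
        _ ≤ k * (c' * ((R + Z j.val)/sqn)) := by
            refine mul_le_mul_of_nonneg_right ?_ hterm0
            have := Finset.card_filter_le (univ : Finset (Fin k)) (fun ℓ => ℓ < j)
            have h2 : (univ : Finset (Fin k)).card = k := by simp
            exact_mod_cast le_trans this (le_of_eq h2)
      -- entry identity
      have eU : (sqn:ℂ) * U j (Fin.castLE hkn i) - G (Fin.castLE hkn i) j
          = ((sqn * ‖w j‖⁻¹ - 1 : ℝ):ℂ) * G (Fin.castLE hkn i) j
            - ((sqn * ‖w j‖⁻¹ : ℝ):ℂ) * Δ j (Fin.castLE hkn i) := by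
        have h1 : U j (Fin.castLE hkn i)
            = ((‖w j‖⁻¹:ℝ):ℂ) * (G (Fin.castLE hkn i) j - Δ j (Fin.castLE hkn i)) := by
          rw [hUw j]
          show (‖w j‖⁻¹ • w j) (Fin.castLE hkn i) = _
          rw [PiLp.smul_apply]
          rw [show w j (Fin.castLE hkn i)
              = G (Fin.castLE hkn i) j - Δ j (Fin.castLE hkn i) from by
            show (g j - Δ j) (Fin.castLE hkn i) = _
            rw [PiLp.sub_apply, hg j (Fin.castLE hkn i)]]
          rw [Complex.real_smul]
        rw [h1]; push_cast; ring
      have hr1 : |sqn * ‖w j‖⁻¹ - 1| ≤ 2*Q'/sqn := by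
        have he : sqn * ‖w j‖⁻¹ - 1 = (sqn - ‖w j‖)/‖w j‖ := by
          rw [sub_div, div_self (hw0 j).ne', ← div_eq_mul_inv]
        rw [he, abs_div, abs_of_pos (hw0 j)]
        calc |sqn - ‖w j‖| / ‖w j‖ ≤ Q' / (sqn/2) := by
              apply div_le_div₀ hQ'0 _ (by positivity) (hwpos j)
              rw [abs_sub_comm]; exact hw' j
        _ = 2*Q'/sqn := by field_simp
      have hr2 : sqn * ‖w j‖⁻¹ ≤ 2 := by
        rw [← div_eq_mul_inv, div_le_iff₀ (hw0 j)]
        linarith [hwpos j]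
      have hr2' : (0:ℝ) ≤ sqn * ‖w j‖⁻¹ := by positivity
      calc ‖(sqn:ℂ) * U j (Fin.castLE hkn i) - G (Fin.castLE hkn i) j‖
          ≤ ‖((sqn * ‖w j‖⁻¹ - 1 : ℝ):ℂ) * G (Fin.castLE hkn i) j‖
            + ‖((sqn * ‖w j‖⁻¹ : ℝ):ℂ) * Δ j (Fin.castLE hkn i)‖ := by
            rw [eU]; exact norm_sub_le _ _
      _ = |sqn * ‖w j‖⁻¹ - 1| * ‖G (Fin.castLE hkn i) j‖
            + (sqn * ‖w j‖⁻¹) * ‖Δ j (Fin.castLE hkn i)‖ := by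
          rw [norm_mul, norm_mul, Complex.norm_real, Complex.norm_real, Real.norm_eq_abs, Real.norm_eq_abs, abs_of_nonneg hr2']
      _ ≤ (2*Q'/sqn) * R + 2 * (k * (c' * ((R + Z j.val)/sqn))) := by
          refine add_le_add ?_ ?_
          · exact mul_le_mul hr1 (hc i j).le (norm_nonneg _) (by positivity)
          · exact mul_le_mul hr2 hDent (norm_nonneg _) (by norm_num)
      _ = (2*Q'*R + 2*k*c'*(R + Z j.val))/sqn := by field_simp
      _ = Z (j.val+1)/sqn := by rw [hZsucc]
  -- conclusion
  have hterm : ∀ i j : Fin k,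
      ‖(sqn:ℂ) * U j (Fin.castLE hkn i) - G (Fin.castLE hkn i) j‖ ≤ Z k / sqn := by
    intro i j
    refine le_trans (claim2 k j j.isLt i) ?_
    gcongr
    exact hZmono j.isLt
  have hFε : ε * F = (k:ℝ)^2 := by rw [hFdef]; field_simp
  calc ∑ i : Fin k, ∑ j : Fin k,
      ‖(sqn:ℂ) * U j (Fin.castLE hkn i) - G (Fin.castLE hkn i) j‖
      ≤ ∑ _i : Fin k, ∑ _j : Fin k, Z k / sqn := by
        refine Finset.sum_le_sum fun i _ => Finset.sum_le_sum fun j _ => hterm i j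
  _ = (k:ℝ)^2 * Z k / sqn := by
      simp [Finset.sum_const, Finset.card_univ, nsmul_eq_mul]; ring
  _ < ε := by
      rw [div_lt_iff₀ hsqn0]
      nlinarith [hfin, hε, hZ0 k, hFε]
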